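/- Let 1 ≤ k ≤ n and λ ∈ Γ_k. Then ((n−k+1)/k)·σ_k(λ)^{(1−k)/k}·σ_{k−1}(λ) ≥ (C_n^k)^{1/k}; equivalently, the sum of the partial derivatives of the function λ ↦ σ_k(λ)^{1/k} at λ is at least (C_n^k)^{1/k}. -/

import Mathlib

open Finset

/-- The `k`-th elementary symmetric function of the entries of `lam` indexed by `s`. -/
noncomputable def esymmOn {n : ℕ} (s : Finset (Fin n)) (k : ℕ) (lam : Fin n → ℝ) : ℝ :=
  ∑ S ∈ s.powersetCard k, ∏ i ∈ S, lam i

/-- `σ_k(λ)`. -/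
noncomputable def esymm {n : ℕ} (k : ℕ) (lam : Fin n → ℝ) : ℝ :=
  esymmOn Finset.univ k lam

/-- `σ_k(λ|i)`: the `k`-th elementary symmetric function with the `i`-th entry deleted. -/
noncomputable def esymmDel {n : ℕ} (i : Fin n) (k : ℕ) (lam : Fin n → ℝ) : ℝ :=
  esymmOn (Finset.univ.erase i) k lam

/-- `σ_k(λ|ij)`: the `k`-th elementary symmetric function with the `i`-th and `j`-th
entries deleted. -/
noncomputable def esymmDel2 {n : ℕ} (i j : Fin n) (k : ℕ) (lam : Fin n → ℝ) : ℝ :=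
  esymmOn ((Finset.univ.erase i).erase j) k lam

/-- The Gårding cone `Γ_k`: all `λ` with `σ_i(λ) > 0` for `1 ≤ i ≤ k`. -/
def GardingCone (n k : ℕ) : Set (Fin n → ℝ) :=
  {lam | ∀ i : ℕ, 1 ≤ i → i ≤ k → 0 < esymm i lam}

section Aux

open Polynomial

lemma esymm_eq_multiset {m : ℕ} (j : ℕ) (μ : Fin m → ℝ) :
    esymm j μ = (Multiset.map μ Finset.univ.val).esymm j := by
  rw [Finset.esymm_map_val]; rfl

lemma esymm_zero_eq {m : ℕ} (μ : Fin m → ℝ) : esymm 0 μ = 1 := by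
  simp [esymm, esymmOn]

lemma esymm_top_eq {m : ℕ} (μ : Fin m → ℝ) : esymm m μ = ∏ i, μ i := by
  have h : Finset.powersetCard m (Finset.univ : Finset (Fin m)) = {Finset.univ} := by
    have := Finset.powersetCard_self (Finset.univ : Finset (Fin m))
    simpa using this
  rw [esymm, esymmOn, h, Finset.sum_singleton]

lemma exists_fn_of_multiset {m : ℕ} (M : Multiset ℝ) (h : Multiset.card M = m) :
    ∃ ν : Fin m → ℝ, Multiset.map ν Finset.univ.val = M := by
  obtain ⟨L, rfl⟩ : ∃ L : List ℝ, (L : Multiset ℝ) = M := ⟨M.toList, M.coe_toList⟩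
  simp only [Multiset.coe_card] at h
  subst h
  exact ⟨L.get, by rw [Fin.univ_val_map, List.ofFn_get]⟩

lemma esymm_inv_mul {m j : ℕ} (hj : j ≤ m) (μ : Fin m → ℝ) (hμ : ∀ i, μ i ≠ 0) :
    esymm j (fun i => (μ i)⁻¹) * ∏ i, μ i = esymm (m - j) μ := by
  rw [esymm, esymm, esymmOn, esymmOn, Finset.sum_mul]
  refine Finset.sum_nbij' (i := fun S => Sᶜ) (j := fun S => Sᶜ) ?_ ?_ ?_ ?_ ?_
  · intro S hS
    rw [Finset.mem_powersetCard_univ] at hS ⊢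
    rw [Finset.card_compl, hS, Fintype.card_fin]
  · intro S hS
    rw [Finset.mem_powersetCard_univ] at hS ⊢
    rw [Finset.card_compl, hS, Fintype.card_fin]
    omega
  · intro S _; simp
  · intro S _; simp
  · intro S hS
    have h1 : (∏ i ∈ S, (μ i)⁻¹) * ∏ i ∈ S, μ i = 1 := by
      rw [← Finset.prod_mul_distrib]
      exact Finset.prod_eq_one fun i _ => inv_mul_cancel₀ (hμ i)
    calc (∏ i ∈ S, (μ i)⁻¹) * ∏ i, μ i
        = (∏ i ∈ S, (μ i)⁻¹) * ((∏ i ∈ S, μ i) * ∏ i ∈ Sᶜ, μ i) := by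
          rw [Finset.prod_mul_prod_compl]
      _ = ∏ i ∈ Sᶜ, μ i := by rw [← mul_assoc, h1, one_mul]

end Aux

section Aux2
open Polynomial

lemma deriv_step {m : ℕ} (μ : Fin (m + 1) → ℝ) :
    ∃ ν : Fin m → ℝ, ∀ j, j ≤ m →
      ((m : ℝ) + 1) * esymm j ν = ((m + 1 - j : ℕ) : ℝ) * esymm j μ := by
  set M : Multiset ℝ := Multiset.map μ Finset.univ.val with hM
  have hMcard : Multiset.card M = m + 1 := by simp [hM]
  set f : ℝ[X] := (M.map fun r => X - C r).prod with hf
  have hfroots : f.roots = M := roots_multiset_prod_X_sub_C M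
  have hfmonic : f.Monic := monic_multiset_prod_of_monic _ _ fun a _ => monic_X_sub_C a
  have hfdeg : f.natDegree = m + 1 := by
    rw [hf, natDegree_multiset_prod_X_sub_C_eq_card, hMcard]
  set g := derivative f with hg
  have hm1 : ((m : ℝ) + 1) ≠ 0 := by positivity
  have hgcoeff : g.coeff m = (m : ℝ) + 1 := by
    rw [hg, coeff_derivative]
    have h1 : f.coeff (m + 1) = 1 := by rw [← hfdeg]; exact hfmonic.coeff_natDegree
    rw [h1, one_mul]
  have hgne : g ≠ 0 := by
    intro h; rw [h, coeff_zero] at hgcoeff; exact hm1 hgcoeff.symm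
  have hgdeg : g.natDegree = m := by
    refine le_antisymm (by have h := natDegree_derivative_le f; rw [hfdeg, Nat.add_sub_cancel] at h; exact h) ?_
    exact le_natDegree_of_ne_zero (by rw [hgcoeff]; exact hm1)
  have hgroots : Multiset.card g.roots = m := by
    refine le_antisymm (hgdeg ▸ card_roots' g) ?_
    have h2 := card_roots_le_derivative f
    rw [hfroots, hMcard, ← hg] at h2
    omega
  have hgsplits : Splits g :=
    splits_iff_card_roots.mpr (by rw [hgroots, hgdeg])
  have hglead : g.leadingCoeff = (m : ℝ) + 1 := by
    rw [leadingCoeff, hgdeg, hgcoeff]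
  have hgfact : g = C ((m : ℝ) + 1) * (g.roots.map fun a => X - C a).prod := by
    rw [← hglead]; exact hgsplits.eq_prod_roots
  obtain ⟨ν, hν⟩ := exists_fn_of_multiset g.roots hgroots
  refine ⟨ν, fun j hj => ?_⟩
  have key := congrArg (fun p : ℝ[X] => p.coeff (m - j)) hgfact
  simp only [coeff_C_mul] at key
  rw [hg, coeff_derivative] at key
  have hv1 : f.coeff (m - j + 1) = (-1) ^ j * M.esymm j := by
    have h1 : m - j + 1 ≤ Multiset.card M := by omega
    rw [hf, Multiset.prod_X_sub_C_coeff M h1, hMcard]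
    congr 2 <;> omega
  have hv2 : (g.roots.map fun a => X - C a).prod.coeff (m - j)
      = (-1) ^ j * g.roots.esymm j := by
    have h1 : m - j ≤ Multiset.card g.roots := by omega
    rw [Multiset.prod_X_sub_C_coeff _ h1, hgroots]
    congr 2 <;> omega
  rw [hv1, hv2] at key
  rw [esymm_eq_multiset j ν, hν, esymm_eq_multiset j μ, ← hM]
  have hsign : ((-1 : ℝ)) ^ j ≠ 0 := by
    apply pow_ne_zero; norm_num
  have hcast : ((m + 1 - j : ℕ) : ℝ) = ((m - j : ℕ) : ℝ) + 1 := by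
    have h2 : m + 1 - j = (m - j) + 1 := by omega
    rw [h2]; push_cast; ring
  have key' : ((-1 : ℝ)) ^ j * (M.esymm j * (((m - j : ℕ) : ℝ) + 1))
      = ((-1 : ℝ)) ^ j * (((m : ℝ) + 1) * g.roots.esymm j) := by
    linear_combination key
  have key2 := mul_left_cancel₀ hsign key'
  rw [hcast]
  linear_combination key2.symm

end Aux2
/-- Normalized elementary symmetric mean `σ_j/C(m,j)`. -/
noncomputable def pE {m : ℕ} (j : ℕ) (μ : Fin m → ℝ) : ℝ := esymm j μ / (m.choose j)

lemma pE_zero {m : ℕ} (μ : Fin m → ℝ) : pE 0 μ = 1 := by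
  simp [pE, esymm_zero_eq]

lemma pE_deriv {m : ℕ} (μ : Fin (m + 1) → ℝ) (ν : Fin m → ℝ)
    (hν : ∀ j, j ≤ m → ((m : ℝ) + 1) * esymm j ν = ((m + 1 - j : ℕ) : ℝ) * esymm j μ)
    (j : ℕ) (hj : j ≤ m) : pE j ν = pE j μ := by
  have h1 := hν j hj
  have hnat : (m + 1) * m.choose j = (m + 1).choose j * (m + 1 - j) := by
    rw [Nat.add_one_mul_choose_eq, Nat.choose_succ_right_eq]
  have hc1 : (0 : ℝ) < (m.choose j : ℝ) := by exact_mod_cast Nat.choose_pos hj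
  have hc2 : (0 : ℝ) < ((m + 1).choose j : ℝ) := by
    exact_mod_cast Nat.choose_pos (by omega)
  rw [pE, pE, div_eq_div_iff hc1.ne' hc2.ne']
  have hnatR : ((m : ℝ) + 1) * (m.choose j : ℝ)
      = ((m + 1).choose j : ℝ) * ((m + 1 - j : ℕ) : ℝ) := by exact_mod_cast hnat
  have hm1 : ((m : ℝ) + 1) ≠ 0 := by positivity
  apply mul_left_cancel₀ hm1
  calc ((m : ℝ) + 1) * (esymm j ν * ((m + 1).choose j : ℝ))
      = (((m : ℝ) + 1) * esymm j ν) * ((m + 1).choose j : ℝ) := by ring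
    _ = (((m + 1 - j : ℕ) : ℝ) * esymm j μ) * ((m + 1).choose j : ℝ) := by rw [h1]
    _ = esymm j μ * (((m + 1).choose j : ℝ) * ((m + 1 - j : ℕ) : ℝ)) := by ring
    _ = esymm j μ * (((m : ℝ) + 1) * (m.choose j : ℝ)) := by rw [← hnatR]
    _ = ((m : ℝ) + 1) * (esymm j μ * (m.choose j : ℝ)) := by ring

lemma newton_base (μ : Fin 2 → ℝ) : pE 0 μ * pE 2 μ ≤ (pE 1 μ) ^ 2 := by
  have h1 : esymm 1 μ = μ 0 + μ 1 := by
    simp [esymm, esymmOn, Finset.powersetCard_one, Fin.sum_univ_two]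
  have h2 : esymm 2 μ = μ 0 * μ 1 := by
    rw [esymm_top_eq, Fin.prod_univ_two]
  rw [pE, pE, pE, esymm_zero_eq, h1, h2]
  norm_num
  nlinarith [sq_nonneg (μ 0 - μ 1)]

lemma newton : ∀ (m : ℕ) (μ : Fin m → ℝ) (j : ℕ), 1 ≤ j → j + 1 ≤ m →
    pE (j - 1) μ * pE (j + 1) μ ≤ (pE j μ) ^ 2 := by
  intro m
  induction m with
  | zero => intro μ j h1 h2; omega
  | succ m ih =>
    intro μ j h1 h2
    by_cases hcase : j + 1 ≤ m
    · obtain ⟨ν, hν⟩ := deriv_step μ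
      rw [← pE_deriv μ ν hν (j - 1) (by omega), ← pE_deriv μ ν hν j (by omega),
        ← pE_deriv μ ν hν (j + 1) (by omega)]
      exact ih ν j h1 hcase
    · have hj : m = j := by omega
      subst hj
      by_cases hzero : ∃ i, μ i = 0
      · obtain ⟨i0, hi0⟩ := hzero
        have hE : esymm (m + 1) μ = 0 := by
          rw [esymm_top_eq]
          exact Finset.prod_eq_zero (Finset.mem_univ i0) hi0
        have hp : pE (m + 1) μ = 0 := by rw [pE, hE, zero_div]
        rw [hp, mul_zero]
        positivity
      · push_neg at hzero
        set ι : Fin (m + 1) → ℝ := fun i => (μ i)⁻¹ with hι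
        have hNι : pE 0 ι * pE 2 ι ≤ (pE 1 ι) ^ 2 := by
          rcases Nat.lt_or_ge (1 + 1) (m + 1) with h | h
          · obtain ⟨ν, hν⟩ := deriv_step ι
            rw [← pE_deriv ι ν hν 0 (by omega), ← pE_deriv ι ν hν 1 (by omega),
              ← pE_deriv ι ν hν 2 (by omega)]
            exact ih ν 1 le_rfl (by omega)
          · have hm1 : m = 1 := by omega
            subst hm1
            exact newton_base ι
        have hP : (∏ i, μ i) ≠ 0 := Finset.prod_ne_zero_iff.mpr fun i _ => hzero i
        have key : ∀ i, i ≤ m + 1 → pE i ι = pE (m + 1 - i) μ / (∏ i, μ i) := by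
          intro i hi
          have h1 := esymm_inv_mul hi μ hzero
          have hC : ((m + 1).choose (m + 1 - i)) = ((m + 1).choose i) := Nat.choose_symm hi
          have hCne : ((m + 1).choose i : ℝ) ≠ 0 := by
            exact_mod_cast (Nat.choose_pos (by omega : i ≤ m + 1)).ne'
          rw [pE, pE, hC, div_div, div_eq_div_iff hCne (mul_ne_zero hCne hP)]
          linear_combination ((m + 1).choose i : ℝ) * h1
        rw [key 0 (by omega), key 1 (by omega), key 2 (by omega)] at hNι
        rw [show m + 1 - 0 = m + 1 from rfl, show m + 1 - 1 = m from rfl,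
          show m + 1 - 2 = m - 1 from by omega] at hNι
        rw [div_mul_div_comm, div_pow, div_le_div_iff₀
          (mul_self_pos.mpr hP) (pow_two_pos_of_ne_zero hP)] at hNι
        nlinarith [hNι, pow_two_pos_of_ne_zero hP]

lemma newton' (m : ℕ) (μ : Fin m → ℝ) (j : ℕ) (h1 : 1 ≤ j) (h2 : j + 1 ≤ m) :
    pE (j - 1) μ * pE (j + 1) μ ≤ (pE j μ) ^ 2 := newton m μ j h1 h2
lemma maclaurin_chain (n : ℕ) (lam : Fin n → ℝ) :
    ∀ k, 1 ≤ k → k ≤ n → (∀ i, 1 ≤ i → i ≤ k → 0 < esymm i lam) →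
    (pE k lam) ^ (k - 1) ≤ (pE (k - 1) lam) ^ k := by
  intro k
  induction k with
  | zero => intro h; omega
  | succ k ih =>
    intro hk1 hkn hpos
    rcases Nat.eq_zero_or_pos k with rfl | hk
    · simp [pE_zero]
    · have hppos : ∀ i, 1 ≤ i → i ≤ k + 1 → 0 < pE i lam := by
        intro i h1 h2
        exact div_pos (hpos i h1 h2)
          (by exact_mod_cast Nat.choose_pos (by omega : i ≤ n))
      have hp0 : ∀ i, i ≤ k → 0 < pE i lam := by
        intro i hi
        rcases Nat.eq_zero_or_pos i with rfl | h
        · rw [pE_zero]; norm_num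
        · exact hppos i h (by omega)
      have hN := newton' n lam k hk hkn
      have hpk := hp0 k le_rfl
      have hpk1 := hp0 (k - 1) (by omega)
      have hpk2 := hppos (k + 1) (by omega) le_rfl
      have IH := ih hk (by omega) fun i a b => hpos i a (by omega)
      have step1 : pE (k + 1) lam ≤ (pE k lam) ^ 2 / pE (k - 1) lam :=
        (le_div_iff₀ hpk1).mpr (by nlinarith [hN])
      have step2 : (pE (k + 1) lam) ^ k ≤ ((pE k lam) ^ 2 / pE (k - 1) lam) ^ k :=
        pow_le_pow_left₀ hpk2.le step1 k
      have step3 : ((pE k lam) ^ 2 / pE (k - 1) lam) ^ k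
          = (pE k lam) ^ (2 * k) / (pE (k - 1) lam) ^ k := by
        rw [div_pow, ← pow_mul]
      have step4 : (pE k lam) ^ (2 * k) / (pE (k - 1) lam) ^ k
          ≤ (pE k lam) ^ (2 * k) / (pE k lam) ^ (k - 1) := by
        gcongr
      have step5 : (pE k lam) ^ (2 * k) / (pE k lam) ^ (k - 1) = (pE k lam) ^ (k + 1) := by
        rw [div_eq_mul_inv, ← pow_sub₀ _ hpk.ne' (by omega : k - 1 ≤ 2 * k)]
        congr 1; omega
      simp only [Nat.add_sub_cancel]
      calc (pE (k + 1) lam) ^ k ≤ ((pE k lam) ^ 2 / pE (k - 1) lam) ^ k := step2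
        _ = (pE k lam) ^ (2 * k) / (pE (k - 1) lam) ^ k := step3
        _ ≤ (pE k lam) ^ (2 * k) / (pE k lam) ^ (k - 1) := step4
        _ = (pE k lam) ^ (k + 1) := step5
theorem sum_derivatives_lower_bound (n k : ℕ) (hk1 : 1 ≤ k) (hkn : k ≤ n)
    (lam : Fin n → ℝ) (hGamma : lam ∈ GardingCone n k) :
    (((n : ℝ) - k + 1) / k) * (esymm k lam) ^ (((1 : ℝ) - k) / k) * esymm (k - 1) lam ≥
      (n.choose k : ℝ) ^ ((1 : ℝ) / k) := by
  have hc : (0 : ℝ) < (n.choose k : ℝ) := by exact_mod_cast Nat.choose_pos hkn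
  have hc' : (0 : ℝ) < (n.choose (k - 1) : ℝ) := by
    exact_mod_cast Nat.choose_pos (by omega : k - 1 ≤ n)
  have ha : 0 < esymm k lam := hGamma k hk1 le_rfl
  have hb : 0 < esymm (k - 1) lam := by
    rcases Nat.eq_or_lt_of_le hk1 with h | h
    · rw [← h]; rw [show (1 : ℕ) - 1 = 0 from rfl, esymm_zero_eq]; norm_num
    · exact hGamma (k - 1) (by omega) (by omega)
  have hchain := maclaurin_chain n lam k hk1 hkn hGamma
  set a := esymm k lam with hA
  set b := esymm (k - 1) lam with hB
  set c := (n.choose k : ℝ) with hC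
  set c' := (n.choose (k - 1) : ℝ) with hC'
  have hkR : (0 : ℝ) < (k : ℝ) := by exact_mod_cast hk1
  -- the key polynomial inequality from the Maclaurin chain
  have hkey : c * a ^ k * c' ^ k ≤ c ^ k * (a * b ^ k) := by
    have h1 : (a / c) ^ (k - 1) ≤ (b / c') ^ k := hchain
    rw [div_pow, div_pow, div_le_div_iff₀ (pow_pos hc _) (pow_pos hc' _)] at h1
    have h2 : a * a ^ (k - 1) = a ^ k := by
      rw [← pow_succ']; congr 1; omega
    have h3 : c * c ^ (k - 1) = c ^ k := by
      rw [← pow_succ']; congr 1; omega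
    calc c * a ^ k * c' ^ k = (c * a) * (a ^ (k - 1) * c' ^ k) := by rw [← h2]; ring
      _ ≤ (c * a) * (b ^ k * c ^ (k - 1)) := by
          apply mul_le_mul_of_nonneg_left h1 (by positivity)
      _ = (c * c ^ (k - 1)) * (a * b ^ k) := by ring
      _ = c ^ k * (a * b ^ k) := by rw [h3]
  -- coefficient identity
  have hcoef : ((n : ℝ) - (k : ℝ) + 1) / (k : ℝ) = c / c' := by
    have hnat : n.choose k * k = n.choose (k - 1) * (n - k + 1) := by
      have h1 := Nat.choose_succ_right_eq n (k - 1)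
      rw [show k - 1 + 1 = k from by omega] at h1
      rw [h1]; congr 1; omega
    have hcast : ((n : ℝ) - (k : ℝ) + 1) = ((n - k + 1 : ℕ) : ℝ) := by
      push_cast [Nat.cast_sub hkn]; ring
    rw [div_eq_div_iff hkR.ne' hc'.ne', hcast]
    rw [mul_comm _ c', hC, hC']
    exact_mod_cast hnat.symm
  rw [ge_iff_le, hcoef]
  have hXpos : (0 : ℝ) ≤ c ^ ((1 : ℝ) / k) := (Real.rpow_pos_of_pos hc _).le
  have hYpos : (0 : ℝ) ≤ c / c' * a ^ (((1 : ℝ) - k) / k) * b :=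
    (mul_pos (mul_pos (div_pos hc hc') (Real.rpow_pos_of_pos ha _)) hb).le
  refine (pow_le_pow_iff_left₀ hXpos hYpos (by omega : k ≠ 0)).mp ?_
  have hXk : (c ^ ((1 : ℝ) / k)) ^ k = c := by
    rw [← Real.rpow_natCast (c ^ ((1 : ℝ) / k)) k, ← Real.rpow_mul hc.le,
      one_div, inv_mul_cancel₀ hkR.ne', Real.rpow_one]
  have hak : (a ^ (((1 : ℝ) - k) / k)) ^ k = a / a ^ k := by
    rw [← Real.rpow_natCast (a ^ (((1 : ℝ) - k) / k)) k, ← Real.rpow_mul ha.le,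
      div_mul_cancel₀ _ hkR.ne', Real.rpow_sub ha, Real.rpow_one, Real.rpow_natCast]
  rw [hXk, mul_pow, mul_pow, hak, div_pow]
  have hfin : c ^ k / c' ^ k * (a / a ^ k) * b ^ k = (c ^ k * (a * b ^ k)) / (c' ^ k * a ^ k) := by
    field_simp
  rw [hfin, le_div_iff₀ (mul_pos (pow_pos hc' _) (pow_pos ha _))]
  calc c * (c' ^ k * a ^ k) = c * a ^ k * c' ^ k := by ring
    _ ≤ c ^ k * (a * b ^ k) := hkey
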